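/- Let 𝒰 be a cube partition of ℕ⁺ of order (ℓ₁,...,ℓ_r) in which every partition class has upper density exactly ∏_{i=1}^r(1/ℓᵢ), and let c_𝒰 be the associated cube colouring. Then for every i ∈ {1,...,r}, there is no directed path of length ℓᵢ in colour i. -/

import Mathlib

open scoped Classical

/-- Upper density of a set of positive integers. -/
noncomputable def upperDensity (A : Set ℕ) : ℝ :=
  Filter.limsup
    (fun n : ℕ => (((Finset.Icc 1 n).filter (fun m => m ∈ A)).card : ℝ) / n)
    Filter.atTop

/-- `k` is the least index at which the tuples `a` and `b` differ. -/
def LeastDiff {r : ℕ} {ℓ : Fin r → ℕ} (a b : ∀ i, Fin (ℓ i)) (k : Fin r) : Prop :=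
  a k ≠ b k ∧ ∀ k' : Fin r, k' < k → a k' = b k'

/-- `c` is the cube colouring associated to the cube partition whose classes are
the fibres of `f` (which maps each positive integer to the index of its class in
the cube `∏ i, {0, …, ℓ i - 1}`): edges within a class get colour `r + 1`; for
`m, n` in different classes with least differing index `k`, if the `k`-th
coordinate of `m`'s class is smaller then `(m, n)` gets colour `r + 1` and
`(n, m)` gets colour `k`. -/
def IsCubeColouring {r : ℕ} {ℓ : Fin r → ℕ} (f : ℕ → ∀ i, Fin (ℓ i))
    (c : ℕ → ℕ → Fin (r + 1)) : Prop :=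
  ∀ m n : ℕ, m ≠ n →
    (f m = f n → c m n = Fin.last r) ∧
    ∀ k : Fin r, LeastDiff (f m) (f n) k →
      (f m k < f n k → c m n = Fin.last r) ∧
      (f n k < f m k → c m n = k.castSucc)

/-- For the cube colouring on a cube partition of order `(ℓ 1, …, ℓ r)` with
equally upper-dense partition classes, there is no directed path of length
`ℓ i` in colour `i` for any `i ∈ [r]`. -/
theorem stmt10 (r : ℕ) (ℓ : Fin r → ℕ) (hℓ : ∀ i, 0 < ℓ i)
    (f : ℕ → ∀ i, Fin (ℓ i))
    (hdens : ∀ x : ∀ i, Fin (ℓ i),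
      upperDensity (f ⁻¹' {x}) = ∏ i, (1 : ℝ) / ℓ i)
    (c : ℕ → ℕ → Fin (r + 1)) (hc : IsCubeColouring f c) :
    ∀ i : Fin r, ¬∃ v : Fin (ℓ i + 1) → ℕ, Function.Injective v ∧
      ∀ j : Fin (ℓ i), c (v j.castSucc) (v j.succ) = i.castSucc := by
  intro i
  rintro ⟨v, hinj, hcol⟩
  -- the i-th coordinate strictly decreases along the path
  have key : ∀ j : Fin (ℓ i), f (v j.succ) i < f (v j.castSucc) i := by
    intro j
    set m := v j.castSucc with hm
    set n := v j.succ with hn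
    have hmn : m ≠ n := fun h => absurd (hinj h)
      (Fin.ne_of_lt (Fin.castSucc_lt_succ : j.castSucc < j.succ))
    have hcmn := hcol j
    rcases eq_or_ne (f m) (f n) with hfe | hfe
    · exact absurd (((hc m n hmn).1 hfe).symm.trans hcmn)
        (Fin.ne_of_lt (Fin.castSucc_lt_last i)).symm
    · -- there is a least differing index
      have hne : ∃ k, f m k ≠ f n k := Function.ne_iff.mp hfe
      obtain ⟨k0, hk0⟩ := hne
      have hS : (Finset.univ.filter (fun k : Fin r => f m k ≠ f n k)).Nonempty :=
        ⟨k0, by simp [hk0]⟩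
      set k := (Finset.univ.filter (fun k : Fin r => f m k ≠ f n k)).min' hS with hkdef
      have hkmem := Finset.min'_mem _ hS
      simp only [Finset.mem_filter] at hkmem
      have hld : LeastDiff (f m) (f n) k := by
        refine ⟨hkmem.2, fun k' hk' => ?_⟩
        by_contra hk'ne
        have : k ≤ k' := Finset.min'_le _ _ (by simp [hk'ne])
        exact absurd hk' (not_lt.mpr this)
      have htri := (hc m n hmn).2 k hld
      rcases lt_trichotomy (f m k) (f n k) with h | h | h
      · exact absurd ((htri.1 h).symm.trans hcmn)
          (Fin.ne_of_lt (Fin.castSucc_lt_last i)).symm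
      · exact absurd h hkmem.2
      · have : k.castSucc = i.castSucc := (htri.2 h).symm.trans hcmn
        have hki : k = i := Fin.castSucc_injective r this
        rw [hki] at h
        exact h
  have hanti : StrictAnti (fun j : Fin (ℓ i + 1) => f (v j) i) :=
    Fin.strictAnti_iff_succ_lt.mpr key
  have hginj : Function.Injective (fun j : Fin (ℓ i + 1) => f (v j) i) :=
    hanti.injective
  have := Fintype.card_le_of_injective _ hginj
  simp at this
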